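/- Let k be a field of characteristic zero, let S = k[X_0, …, X_r] (r ≥ 1) be the graded polynomial ring, and let d ≥ 1 be an integer. Suppose ψ : S_d → S_d is a k-linear endomorphism of the space of degree-d forms such that ψ(ℓ·S_{d-1}) ⊆ ℓ·S_{d-1} for every linear form ℓ ∈ S_1. Then there is a single scalar α ∈ k such that ψ(f) = α·f for all f ∈ S_d (and ψ is the zero map if and only if α = 0). -/

import Mathlib

open MvPolynomial

namespace Stmt0Aux

variable {k : Type*} [Field k] {σ : Type*}

lemma exists_single_of_degree_one {m : σ →₀ ℕ} (h : m.degree = 1) :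
    ∃ i, m = Finsupp.single i 1 := by
  classical
  have hm : m ≠ 0 := by
    rintro rfl; simp at h
  obtain ⟨i, hi⟩ : ∃ i, m i ≠ 0 := by
    by_contra hc; push_neg at hc
    exact hm (Finsupp.ext fun j => hc j)
  have hi' : i ∈ m.support := Finsupp.mem_support_iff.2 hi
  have hsum : ∑ s ∈ m.support, m s = 1 := h
  have h2 : m i + ∑ s ∈ m.support.erase i, m s = 1 := by
    rw [Finset.add_sum_erase _ _ hi']; exact hsum
  have h3 : m i = 1 ∧ ∑ s ∈ m.support.erase i, m s = 0 := by
    constructor <;> omega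
  refine ⟨i, Finsupp.ext fun j => ?_⟩
  rcases eq_or_ne j i with rfl | hji
  · simp [h3.1]
  · rw [Finsupp.single_eq_of_ne' (Ne.symm hji)]
    by_cases hj : j ∈ m.support
    · exact Finset.sum_eq_zero_iff.1 h3.2 j (Finset.mem_erase.2 ⟨hji, hj⟩)
    · exact Finsupp.notMem_support_iff.1 hj

lemma linear_decomp [Fintype σ] {ℓ : MvPolynomial σ k} (hl : ℓ.IsHomogeneous 1) :
    ℓ = ∑ j : σ, (coeff (Finsupp.single j 1) ℓ) • X j := by
  classical
  ext m
  rw [coeff_sum]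
  simp only [coeff_smul, coeff_X', smul_eq_mul]
  by_cases hm : ∃ i, m = Finsupp.single i 1
  · obtain ⟨i, rfl⟩ := hm
    rw [Finset.sum_eq_single i]
    · rw [if_pos rfl, mul_one]
    · intro j _ hji
      rw [if_neg (fun h => hji ((Finsupp.single_left_inj one_ne_zero).1 h)), mul_zero]
    · intro h; exact absurd (Finset.mem_univ i) h
  · rw [hl.coeff_eq_zero (fun hdeg => hm (exists_single_of_degree_one hdeg))]
    rw [Finset.sum_eq_zero]
    intro j _
    rw [if_neg (fun h => hm ⟨j, h.symm⟩), mul_zero]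

lemma linear_prime [Fintype σ] {ℓ : MvPolynomial σ k} (hl : ℓ.IsHomogeneous 1)
    (h0 : ℓ ≠ 0) : Prime ℓ := by
  classical
  have hex : ∃ i : σ, coeff (Finsupp.single i 1) ℓ ≠ 0 := by
    by_contra hc; push_neg at hc
    apply h0
    rw [linear_decomp hl]
    simp [hc]
  obtain ⟨i0, ha⟩ := hex
  set a := coeff (Finsupp.single i0 1) ℓ with ha'
  set g : σ → MvPolynomial σ k :=
    Function.update (fun j : σ => (X j : MvPolynomial σ k)) i0 (X i0 - a⁻¹ • ℓ) with hg
  have hgi0 : g i0 = X i0 - a⁻¹ • ℓ := by rw [hg]; exact Function.update_self _ _ _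
  have hgj : ∀ j : σ, j ≠ i0 → g j = X j := by
    intro j hj; rw [hg]; exact Function.update_of_ne hj _ _
  have key : ∑ j : σ, coeff (Finsupp.single j 1) ℓ • g j = 0 := by
    have h1 : ∀ j : σ, coeff (Finsupp.single j 1) ℓ • g j
        = coeff (Finsupp.single j 1) ℓ • X j + (if j = i0 then -ℓ else 0) := by
      intro j
      by_cases hj : j = i0
      · subst hj
        rw [if_pos rfl, hgi0, smul_sub, smul_smul, ← ha', mul_inv_cancel₀ ha, one_smul]
        abel
      · rw [if_neg hj, hgj j hj, add_zero]
    rw [Finset.sum_congr rfl (fun j _ => h1 j), Finset.sum_add_distrib,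
      Finset.sum_ite_eq' Finset.univ i0, if_pos (Finset.mem_univ i0), ← linear_decomp hl]
    abel
  have hφℓ : aeval g ℓ = 0 := by
    conv_lhs => rw [linear_decomp hl]
    rw [map_sum]
    simp only [map_smul, aeval_X]
    exact key
  have hstab : ∀ p : MvPolynomial σ k, aeval g p - p ∈ Ideal.span {ℓ} := by
    intro p
    induction p using MvPolynomial.induction_on with
    | C c => simp [Ideal.zero_mem]
    | add p q hp hq =>
        have h := Ideal.add_mem _ hp hq
        rw [map_add]
        convert h using 1
        ring
    | mul_X p j hp =>
        rw [map_mul, aeval_X]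
        have h2 : aeval g p * g j - p * X j
            = aeval g p * (g j - X j) + (aeval g p - p) * X j := by ring
        rw [h2]
        refine Ideal.add_mem _ (Ideal.mul_mem_left _ _ ?_) (Ideal.mul_mem_right _ _ hp)
        by_cases hj : j = i0
        · subst hj
          rw [hgi0]
          have h3 : (X j - a⁻¹ • ℓ - X j : MvPolynomial σ k) = -(a⁻¹ • ℓ) := by abel
          rw [h3, smul_eq_C_mul]
          exact neg_mem (Ideal.mul_mem_left _ _ (Ideal.subset_span (Set.mem_singleton _)))
        · rw [hgj j hj, sub_self]
          exact Ideal.zero_mem _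
  have hdvd : ∀ p : MvPolynomial σ k, ℓ ∣ p ↔ aeval g p = 0 := by
    intro p
    constructor
    · rintro ⟨q, rfl⟩; rw [map_mul, hφℓ, zero_mul]
    · intro hp
      have h := hstab p
      rw [hp, zero_sub] at h
      have h2 : p ∈ Ideal.span {ℓ} := by
        have := neg_mem h
        rwa [neg_neg] at this
      exact Ideal.mem_span_singleton.1 h2
  refine ⟨h0, ?_, ?_⟩
  · intro hu
    obtain ⟨v, hv⟩ := hu.exists_right_inv
    have h := (hdvd 1).1 ⟨v, hv.symm⟩
    rw [map_one] at h
    exact one_ne_zero h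
  · intro p q hpq
    rw [hdvd] at hpq
    rw [hdvd p, hdvd q]
    rw [map_mul] at hpq
    exact mul_eq_zero.1 hpq

lemma hom_factor {g q p : MvPolynomial σ k} {m n : ℕ} (hg : g.IsHomogeneous m) (hg0 : g ≠ 0)
    (hp : p.IsHomogeneous n) (h : p = g * q) :
    p = g * (homogeneousComponent (n - m) q) := by
  by_cases hq : q = 0
  · subst hq; simpa using h
  have hp0 : p ≠ 0 := by rw [h]; exact mul_ne_zero hg0 hq
  have hpc : homogeneousComponent n p = p := by
    rw [homogeneousComponent_of_mem hp, if_pos rfl]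
  have expand : p = ∑ i ∈ Finset.range (q.totalDegree + 1), g * homogeneousComponent i q := by
    rw [h, ← Finset.mul_sum, sum_homogeneousComponent]
  have hsum : p = ∑ i ∈ Finset.range (q.totalDegree + 1),
      (if n = m + i then g * homogeneousComponent i q else 0) := by
    conv_lhs => rw [← hpc, expand]
    rw [map_sum]
    refine Finset.sum_congr rfl fun i _ => ?_
    exact homogeneousComponent_of_mem (hg.mul (homogeneousComponent_isHomogeneous i q))
  rcases le_or_gt m n with hmn | hmn
  · rcases lt_or_ge q.totalDegree (n - m) with hbig | hsmall
    · exfalso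
      apply hp0
      rw [hsum, Finset.sum_eq_zero]
      intro i hi
      rw [Finset.mem_range] at hi
      rw [if_neg (by omega)]
    · rw [Finset.sum_eq_single (n - m)] at hsum
      · rwa [if_pos (by omega)] at hsum
      · intro i hi hne
        rw [Finset.mem_range] at hi
        rw [if_neg (by omega)]
      · intro hmem
        exact absurd (Finset.mem_range.2 (by omega)) hmem
  · exfalso
    apply hp0
    rw [hsum, Finset.sum_eq_zero]
    intro i _
    rw [if_neg (by omega)]

lemma eq_smul_of_dvd {g p : MvPolynomial σ k} {n : ℕ} (hg : g.IsHomogeneous n) (hg0 : g ≠ 0)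
    (hp : p.IsHomogeneous n) (h : g ∣ p) : ∃ c : k, p = c • g := by
  obtain ⟨q, hq⟩ := h
  have h2 := hom_factor hg hg0 hp hq
  rw [Nat.sub_self, homogeneousComponent_zero] at h2
  refine ⟨coeff 0 q, ?_⟩
  rw [h2, smul_eq_C_mul]
  ring

end Stmt0Aux
namespace Stmt0Aux

variable {k : Type*} [Field k] [CharZero k] {σ : Type*}

/-- A linear form avoiding the finitely many "bad directions" in `B`. -/
def Good (B : Finset (MvPolynomial σ k)) (ℓ : MvPolynomial σ k) : Prop :=
  ℓ.IsHomogeneous 1 ∧ ℓ ≠ 0 ∧ ∀ b ∈ B, ∀ c : k, ℓ ≠ c • b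

lemma smul_cancel {M : Type*} [AddCommGroup M] [Module k M] [NoZeroSMulDivisors k M]
    {x : M} (hx : x ≠ 0) {c c' : k} (h : c • x = c' • x) : c = c' := by
  have h2 : (c - c') • x = 0 := by rw [sub_smul, h, sub_self]
  rcases smul_eq_zero.1 h2 with h' | h'
  · exact sub_eq_zero.1 h'
  · exact absurd h' hx

open Classical in
/-- The set of solutions of a predicate with at most one solution. -/
noncomputable def uniq (P : k → Prop) : Finset k :=
  if h : ∃ t, P t then {h.choose} else ∅

lemma mem_uniq {P : k → Prop} (hu : ∀ t t' : k, P t → P t' → t = t') {t : k} (ht : P t) :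
    t ∈ uniq P := by
  have hex : ∃ t, P t := ⟨t, ht⟩
  rw [uniq, dif_pos hex, Finset.mem_singleton]
  exact hu t hex.choose ht hex.choose_spec

lemma exists_good (B : Finset (MvPolynomial σ k)) (A : Finset k) {v w : MvPolynomial σ k}
    (hv : v.IsHomogeneous 1) (hw : w.IsHomogeneous 1)
    (hind : ∀ a b : k, a • v + b • w = 0 → a = 0 ∧ b = 0) :
    ∃ t : k, t ∉ A ∧ t ≠ 0 ∧ Good B (v + t • w) := by
  classical
  obtain ⟨t, ht⟩ := Infinite.exists_notMem_finset
    ((B.biUnion fun b => uniq (fun t : k => ∃ e : k, v + t • w = e • b)) ∪ A ∪ {0})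
  simp only [Finset.mem_union, Finset.mem_singleton, not_or] at ht
  obtain ⟨⟨htB, htA⟩, ht0⟩ := ht
  have hw0 : w ≠ 0 := by
    intro h
    exact one_ne_zero (hind 0 1 (by rw [h, smul_zero, zero_smul, zero_add])).2
  refine ⟨t, htA, ht0, ?_, ?_, ?_⟩
  · exact hv.add ((homogeneousSubmodule σ k 1).smul_mem t hw)
  · intro h0
    exact one_ne_zero (hind 1 t (by rwa [one_smul])).1
  · intro b hb c hc
    apply htB
    refine Finset.mem_biUnion.2 ⟨b, hb, ?_⟩
    refine mem_uniq ?_ ⟨c, hc⟩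
    rintro t₁ t₂ ⟨e₁, h₁⟩ ⟨e₂, h₂⟩
    by_contra hne
    have hsub : (t₁ - t₂) • w = (e₁ - e₂) • b := by
      have hd : v + t₁ • w - (v + t₂ • w) = e₁ • b - e₂ • b := by rw [h₁, h₂]
      calc (t₁ - t₂) • w = v + t₁ • w - (v + t₂ • w) := by rw [sub_smul]; abel
        _ = e₁ • b - e₂ • b := hd
        _ = (e₁ - e₂) • b := (sub_smul _ _ _).symm
    set ν := (t₁ - t₂)⁻¹ * (e₁ - e₂) with hνdef
    have hν : w = ν • b := by
      rw [hνdef, mul_smul, ← hsub, smul_smul, inv_mul_cancel₀ (sub_ne_zero.2 hne), one_smul]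
    have hv' : v = e₁ • b - t₁ • w := by rw [← h₁]; abel
    have hμ : v = (e₁ - t₁ * ν) • b := by rw [hv', hν, smul_smul, sub_smul]
    have h0 : ν • v + (-(e₁ - t₁ * ν)) • w = 0 := by
      rw [hμ, hν, smul_smul, neg_smul, smul_smul, ← neg_smul, ← add_smul]
      have : ν * (e₁ - t₁ * ν) + -((e₁ - t₁ * ν) * ν) = 0 := by ring
      rw [this, zero_smul]
    obtain ⟨hν0, -⟩ := hind _ _ h0
    rw [hν0, zero_smul] at hν
    exact hw0 hν

lemma degree_add' (a b : σ →₀ ℕ) : (a + b).degree = a.degree + b.degree := by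
  rw [Finsupp.degree_eq_weight_one, map_add]

lemma degree_single_one (i : σ) : (Finsupp.single i 1 : σ →₀ ℕ).degree = 1 := by
  simp [Finsupp.degree_apply, Finsupp.support_single_ne_zero _ one_ne_zero]

variable {r : ℕ}

lemma indep_X {i j : Fin (r+1)} (hij : i ≠ j) :
    ∀ a b : k, a • (X i : MvPolynomial (Fin (r+1)) k) + b • X j = 0 → a = 0 ∧ b = 0 := by
  intro a b hab
  constructor
  · have h := congrArg (coeff (Finsupp.single i 1)) hab
    rwa [coeff_add, coeff_smul, coeff_smul, coeff_X, coeff_zero, coeff_X',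
      if_neg (fun h' => hij ((Finsupp.single_left_inj one_ne_zero).1 h').symm),
      smul_eq_mul, smul_eq_mul, if_pos rfl, mul_one, mul_zero, add_zero] at h
  · have h := congrArg (coeff (Finsupp.single j 1)) hab
    rwa [coeff_add, coeff_smul, coeff_smul, coeff_X, coeff_zero, coeff_X',
      if_neg (fun h' => hij (((Finsupp.single_left_inj one_ne_zero).1 h'))),
      smul_eq_mul, smul_eq_mul, if_pos rfl, mul_one, mul_zero, zero_add] at h

lemma exists_other (hr : 1 ≤ r) (i : Fin (r+1)) : ∃ j : Fin (r+1), j ≠ i :=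
  Fintype.exists_ne_of_one_lt_card (by simp; omega) i

lemma span_lemma (hr : 1 ≤ r) (B : Finset (MvPolynomial (Fin (r+1)) k)) (n : ℕ)
    (Z : Submodule k (MvPolynomial (Fin (r+1)) k))
    (hZ : ∀ ℓ q : MvPolynomial (Fin (r+1)) k, Good B ℓ → q.IsHomogeneous n → ℓ * q ∈ Z) :
    ∀ f : MvPolynomial (Fin (r+1)) k, f.IsHomogeneous (n+1) → f ∈ Z := by
  classical
  intro f hf
  rw [← support_sum_monomial_coeff f]
  refine Submodule.sum_mem _ fun s hs => ?_
  have hdeg : s.degree = n + 1 := by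
    rw [Finsupp.degree_eq_weight_one]
    exact hf (mem_support_iff.1 hs)
  obtain ⟨i, hi⟩ : ∃ i, s i ≠ 0 := by
    by_contra hc; push_neg at hc
    have : s = 0 := Finsupp.ext fun j => hc j
    rw [this] at hdeg
    simp at hdeg
  set t := s - Finsupp.single i 1 with htdef
  have hst : Finsupp.single i 1 + t = s := by
    ext j
    rcases eq_or_ne i j with rfl | hne
    · simp only [htdef, Finsupp.add_apply, Finsupp.tsub_apply, Finsupp.single_eq_same]
      omega
    · simp [htdef, Finsupp.single_eq_of_ne' hne]
  have hmono : monomial s (coeff s f) = X i * monomial t (coeff s f) := by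
    rw [← hst, monomial_single_add, pow_one]
  have htdeg : t.degree = n := by
    have h2 := degree_add' (Finsupp.single i 1) t
    rw [hst, hdeg, degree_single_one] at h2
    omega
  obtain ⟨j, hj⟩ := exists_other hr i
  obtain ⟨c₁, -, hc₁0, hgood₁⟩ := exists_good B ∅ (isHomogeneous_X k i) (isHomogeneous_X k j)
    (indep_X (Ne.symm hj))
  obtain ⟨c₂, hc₂A, hc₂0, hgood₂⟩ := exists_good B {c₁} (isHomogeneous_X k i)
    (isHomogeneous_X k j) (indep_X (Ne.symm hj))
  have hgmem : (monomial t (coeff s f)).IsHomogeneous n := isHomogeneous_monomial _ htdeg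
  have hm₁ : (X i + c₁ • X j) * monomial t (coeff s f) ∈ Z := hZ _ _ hgood₁ hgmem
  have hm₂ : (X i + c₂ • X j) * monomial t (coeff s f) ∈ Z := hZ _ _ hgood₂ hgmem
  have hne : c₂ - c₁ ≠ 0 := sub_ne_zero.2 (by intro h; exact hc₂A (by simp [h]))
  have hkey : (c₂ - c₁) • (X i * monomial t (coeff s f))
      = c₂ • ((X i + c₁ • X j) * monomial t (coeff s f))
        - c₁ • ((X i + c₂ • X j) * monomial t (coeff s f)) := by
    simp only [smul_eq_C_mul, map_sub]
    ring
  have hmem : X i * monomial t (coeff s f) ∈ Z := by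
    have hz := Z.sub_mem (Z.smul_mem c₂ hm₁) (Z.smul_mem c₁ hm₂)
    rw [← hkey] at hz
    have h3 := Z.smul_mem (c₂ - c₁)⁻¹ hz
    rwa [smul_smul, inv_mul_cancel₀ hne, one_smul] at h3
  rw [hmono]
  exact hmem

end Stmt0Aux
namespace Stmt0Aux

variable {k : Type*} [Field k] [CharZero k] {r : ℕ}

theorem key (hr : 1 ≤ r) (d : ℕ) :
    ∀ (B : Finset (MvPolynomial (Fin (r+1)) k))
      (φ : MvPolynomial (Fin (r+1)) k → MvPolynomial (Fin (r+1)) k),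
    (∀ f g, f.IsHomogeneous (d+1) → g.IsHomogeneous (d+1) → φ (f + g) = φ f + φ g) →
    (∀ (c : k) f, f.IsHomogeneous (d+1) → φ (c • f) = c • φ f) →
    (∀ f, f.IsHomogeneous (d+1) → (φ f).IsHomogeneous (d+1)) →
    (∀ m, Good B m → ∀ f, f.IsHomogeneous (d+1) → m ∣ f → m ∣ φ f) →
    ∃ α : k, ∀ f, f.IsHomogeneous (d+1) → φ f = α • f := by
  induction d with
  | zero =>
    intro B φ hadd hsmul hmem hdvd
    have hφ0 : φ 0 = 0 := by
      have h := hsmul 0 0 (isHomogeneous_zero _ _ _)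
      simpa using h
    have heig : ∀ m, Good B m → ∃ c : k, φ m = c • m := by
      intro m hm
      exact eq_smul_of_dvd hm.1 hm.2.1 (hmem m hm.1) (hdvd m hm m hm.1 dvd_rfl)
    choose e he using heig
    obtain ⟨j, hj⟩ := exists_other hr 0
    obtain ⟨t0, -, -, hℓ0⟩ := exists_good B ∅ (isHomogeneous_X k (0 : Fin (r+1)))
      (isHomogeneous_X k j) (indep_X (Ne.symm hj))
    set ℓ0 : MvPolynomial (Fin (r+1)) k := X 0 + t0 • X j with hℓ0def
    set α := e ℓ0 hℓ0 with hα
    have hsame : ∀ m (hm : Good B m), e m hm = α := by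
      intro m hm
      by_cases hdep : ∃ c : k, m = c • ℓ0
      · obtain ⟨c, hcm⟩ := hdep
        have h1 : φ m = c • (α • ℓ0) := by rw [hcm, hsmul c ℓ0 hℓ0.1, he ℓ0 hℓ0, ← hα]
        have h2 : φ m = e m hm • m := he m hm
        apply smul_cancel hm.2.1
        rw [← h2, h1, hcm, smul_smul, smul_smul, mul_comm]
      · have hind : ∀ a b : k, a • ℓ0 + b • m = 0 → a = 0 ∧ b = 0 := by
          intro a b hab
          by_cases hb : b = 0
          · subst hb
            rw [zero_smul, add_zero] at hab
            refine ⟨?_, rfl⟩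
            rcases smul_eq_zero.1 hab with h | h
            · exact h
            · exact absurd h hℓ0.2.1
          · exfalso
            apply hdep
            have hm' : b • m = -(a • ℓ0) := eq_neg_of_add_eq_zero_right hab
            refine ⟨-(b⁻¹ * a), ?_⟩
            calc m = b⁻¹ • (b • m) := by rw [smul_smul, inv_mul_cancel₀ hb, one_smul]
              _ = b⁻¹ • (-(a • ℓ0)) := by rw [hm']
              _ = (-(b⁻¹ * a)) • ℓ0 := by rw [smul_neg, smul_smul, neg_smul]
        obtain ⟨t, -, ht0, hgood⟩ := exists_good B ∅ hℓ0.1 hm.1 hind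
        have hhom_tm : ((t • m : MvPolynomial (Fin (r+1)) k)).IsHomogeneous 1 :=
          (homogeneousSubmodule _ k 1).smul_mem t hm.1
        have h4 : e _ hgood • (ℓ0 + t • m) = α • ℓ0 + (t * e m hm) • m := by
          rw [← he _ hgood, hadd ℓ0 (t • m) hℓ0.1 hhom_tm, hsmul t m hm.1, he ℓ0 hℓ0, ← hα,
            he m hm, smul_smul]
        have h3 : (α - e _ hgood) • ℓ0 + (t * e m hm - e _ hgood * t) • m = 0 := by
          have h6 : α • ℓ0 + (t * e m hm) • m = e _ hgood • ℓ0 + (e _ hgood * t) • m := by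
            rw [← h4, smul_add, smul_smul]
          rw [sub_smul, sub_smul]
          calc α • ℓ0 - e _ hgood • ℓ0 + ((t * e m hm) • m - (e _ hgood * t) • m)
              = (α • ℓ0 + (t * e m hm) • m) - (e _ hgood • ℓ0 + (e _ hgood * t) • m) := by abel
            _ = 0 := by rw [h6, sub_self]
        obtain ⟨hA, hB⟩ := hind _ _ h3
        have h5 : e m hm = e _ hgood := by
          have h6 : t * e m hm = t * e _ hgood := by
            rw [sub_eq_zero] at hB
            rw [hB, mul_comm]
          exact mul_left_cancel₀ ht0 h6
        rw [h5, ← sub_eq_zero]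
        rw [← neg_sub]
        rw [hA, neg_zero]
    set Z : Submodule k (MvPolynomial (Fin (r+1)) k) :=
      { carrier := {f | f.IsHomogeneous 1 ∧ φ f = α • f}
        add_mem' := by
          rintro f g ⟨hf1, hf2⟩ ⟨hg1, hg2⟩
          exact ⟨hf1.add hg1, by rw [hadd f g hf1 hg1, hf2, hg2, smul_add]⟩
        zero_mem' := ⟨isHomogeneous_zero _ _ _, by rw [hφ0, smul_zero]⟩
        smul_mem' := by
          rintro c f ⟨hf1, hf2⟩
          refine ⟨(homogeneousSubmodule _ k 1).smul_mem c hf1, ?_⟩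
          rw [hsmul c f hf1, hf2, smul_smul, smul_smul, mul_comm] } with hZdef
    have hZmem : ∀ g : MvPolynomial (Fin (r+1)) k,
        g ∈ Z ↔ (g.IsHomogeneous 1 ∧ φ g = α • g) := fun g => Iff.rfl
    have hspan := span_lemma hr B 0 Z ?_
    · exact ⟨α, fun f hf => ((hZmem f).1 (hspan f hf)).2⟩
    · intro ℓ q hgood hq
      have hqC : q = C (coeff 0 q) := by
        have h1 : homogeneousComponent 0 q = q := by
          rw [homogeneousComponent_of_mem hq, if_pos rfl]
        conv_lhs => rw [← h1, homogeneousComponent_zero]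
      refine (hZmem _).2 ⟨hgood.1.mul hq, ?_⟩
      have h2 : ℓ * q = coeff 0 q • ℓ := by
        conv_lhs => rw [hqC]
        rw [smul_eq_C_mul]
        ring
      rw [h2, hsmul _ ℓ hgood.1, he ℓ hgood, hsame ℓ hgood, smul_smul, smul_smul, mul_comm]
  | succ d ih =>
    intro B φ hadd hsmul hmem hdvd
    have hmul : ∀ ℓ, Good B ℓ → ∀ f : MvPolynomial (Fin (r+1)) k,
        f.IsHomogeneous (d+1) → (ℓ * f).IsHomogeneous (d+1+1) := by
      intro ℓ hℓ f hf
      rw [mul_comm]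
      exact hf.mul hℓ.1
    have key2 : ∀ ℓ, Good B ℓ → ∃ α : k, ∀ q : MvPolynomial (Fin (r+1)) k,
        q.IsHomogeneous (d+1) → φ (ℓ * q) = α • (ℓ * q) := by
      intro ℓ hℓ
      have hexists : ∀ q : MvPolynomial (Fin (r+1)) k, q.IsHomogeneous (d+1) →
          ∃ q', q'.IsHomogeneous (d+1) ∧ φ (ℓ * q) = ℓ * q' := by
        intro q hq
        have hlq := hmul ℓ hℓ q hq
        obtain ⟨w, hw⟩ := hdvd ℓ hℓ (ℓ * q) hlq (dvd_mul_right ℓ q)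
        have hf := hom_factor hℓ.1 hℓ.2.1 (hmem _ hlq) hw
        exact ⟨homogeneousComponent (d+1) w,
          by simpa using homogeneousComponent_isHomogeneous (d+1+1-1) w,
          by simpa using hf⟩
      choose φℓ hφℓmem hφℓeq using hexists
      classical
      set Φ : MvPolynomial (Fin (r+1)) k → MvPolynomial (Fin (r+1)) k :=
        fun q => if h : q.IsHomogeneous (d+1) then φℓ q h else 0 with hΦ
      have hΦeq : ∀ q (h : q.IsHomogeneous (d+1)), φ (ℓ * q) = ℓ * Φ q := by
        intro q h
        simp only [hΦ]
        rw [dif_pos h]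
        exact hφℓeq q h
      have hΦmem : ∀ q, q.IsHomogeneous (d+1) → (Φ q).IsHomogeneous (d+1) := by
        intro q h
        simp only [hΦ]
        rw [dif_pos h]
        exact hφℓmem q h
      have hcancel : ∀ x y : MvPolynomial (Fin (r+1)) k, ℓ * x = ℓ * y → x = y :=
        fun x y h => mul_left_cancel₀ hℓ.2.1 h
      have hΦadd : ∀ f g : MvPolynomial (Fin (r+1)) k, f.IsHomogeneous (d+1) →
          g.IsHomogeneous (d+1) → Φ (f + g) = Φ f + Φ g := by
        intro f g hf hg
        apply hcancel
        calc ℓ * Φ (f + g) = φ (ℓ * (f + g)) := (hΦeq _ (hf.add hg)).symm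
          _ = φ (ℓ * f + ℓ * g) := by rw [mul_add]
          _ = φ (ℓ * f) + φ (ℓ * g) := hadd _ _ (hmul ℓ hℓ f hf) (hmul ℓ hℓ g hg)
          _ = ℓ * Φ f + ℓ * Φ g := by rw [hΦeq f hf, hΦeq g hg]
          _ = ℓ * (Φ f + Φ g) := by rw [mul_add]
      have hΦsmul : ∀ (c : k) (f : MvPolynomial (Fin (r+1)) k), f.IsHomogeneous (d+1) →
          Φ (c • f) = c • Φ f := by
        intro c f hf
        apply hcancel
        have hcf : ((c • f : MvPolynomial (Fin (r+1)) k)).IsHomogeneous (d+1) :=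
          (homogeneousSubmodule _ k (d+1)).smul_mem c hf
        calc ℓ * Φ (c • f) = φ (ℓ * (c • f)) := (hΦeq _ hcf).symm
          _ = φ (c • (ℓ * f)) := by rw [mul_smul_comm]
          _ = c • φ (ℓ * f) := hsmul c _ (hmul ℓ hℓ f hf)
          _ = c • (ℓ * Φ f) := by rw [hΦeq f hf]
          _ = ℓ * (c • Φ f) := (mul_smul_comm c ℓ (Φ f)).symm
      have hΦdvd : ∀ m, Good (insert ℓ B) m → ∀ q : MvPolynomial (Fin (r+1)) k,
          q.IsHomogeneous (d+1) → m ∣ q → m ∣ Φ q := by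
        intro m hm q hq hdq
        have hmB : Good B m := ⟨hm.1, hm.2.1, fun b hb => hm.2.2 b (Finset.mem_insert_of_mem hb)⟩
        have h1 : m ∣ φ (ℓ * q) := hdvd m hmB (ℓ * q) (hmul ℓ hℓ q hq) (hdq.mul_left ℓ)
        rw [hΦeq q hq] at h1
        have hprime := linear_prime hm.1 hm.2.1
        rcases hprime.2.2 ℓ (Φ q) h1 with h | h
        · exfalso
          obtain ⟨c, hc⟩ := eq_smul_of_dvd hm.1 hm.2.1 hℓ.1 h
          have hc0 : c ≠ 0 := by rintro rfl; rw [zero_smul] at hc; exact hℓ.2.1 hc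
          exact hm.2.2 ℓ (Finset.mem_insert_self ℓ B) c⁻¹
            (by rw [hc, smul_smul, inv_mul_cancel₀ hc0, one_smul])
        · exact h
      obtain ⟨α, hα⟩ := ih (insert ℓ B) Φ hΦadd hΦsmul hΦmem hΦdvd
      refine ⟨α, fun q hq => ?_⟩
      rw [hΦeq q hq, hα q hq, mul_smul_comm]
    choose A hA using key2
    obtain ⟨j, hj⟩ := exists_other hr 0
    obtain ⟨t0, -, -, hℓ0⟩ := exists_good B ∅ (isHomogeneous_X k (0 : Fin (r+1)))
      (isHomogeneous_X k j) (indep_X (Ne.symm hj))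
    set ℓ0 : MvPolynomial (Fin (r+1)) k := X 0 + t0 • X j with hℓ0def
    set α := A ℓ0 hℓ0 with hα
    have hXpow : ∀ e : ℕ, ((X (0:Fin (r+1)) : MvPolynomial (Fin (r+1)) k) ^ e).IsHomogeneous e :=
      fun e => by simpa using (isHomogeneous_X k (0 : Fin (r+1))).pow e
    have hsame : ∀ ℓ (hℓ : Good B ℓ), A ℓ hℓ = α := by
      intro ℓ hℓ
      have hq1 : ((ℓ0 * X (0:Fin (r+1)) ^ d : MvPolynomial (Fin (r+1)) k)).IsHomogeneous (d+1) := by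
        rw [mul_comm]
        exact (hXpow d).mul hℓ0.1
      have hq2 : ((ℓ * X (0:Fin (r+1)) ^ d : MvPolynomial (Fin (r+1)) k)).IsHomogeneous (d+1) := by
        rw [mul_comm]
        exact (hXpow d).mul hℓ.1
      have h1 := hA ℓ hℓ (ℓ0 * X 0 ^ d) hq1
      have h2 := hA ℓ0 hℓ0 (ℓ * X 0 ^ d) hq2
      have hcomm : ℓ * (ℓ0 * X (0:Fin (r+1)) ^ d) = ℓ0 * (ℓ * X 0 ^ d) := by ring
      rw [hcomm] at h1
      have hnz : ℓ0 * (ℓ * X (0:Fin (r+1)) ^ d) ≠ 0 :=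
        mul_ne_zero hℓ0.2.1 (mul_ne_zero hℓ.2.1 (pow_ne_zero _ (X_ne_zero _)))
      rw [← hα] at h2
      exact smul_cancel hnz (h1.symm.trans h2)
    have hφ0 : φ 0 = 0 := by
      have h := hsmul 0 0 (isHomogeneous_zero _ _ _)
      simpa using h
    set Z : Submodule k (MvPolynomial (Fin (r+1)) k) :=
      { carrier := {f | f.IsHomogeneous (d+1+1) ∧ φ f = α • f}
        add_mem' := by
          rintro f g ⟨hf1, hf2⟩ ⟨hg1, hg2⟩
          exact ⟨hf1.add hg1, by rw [hadd f g hf1 hg1, hf2, hg2, smul_add]⟩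
        zero_mem' := ⟨isHomogeneous_zero _ _ _, by rw [hφ0, smul_zero]⟩
        smul_mem' := by
          rintro c f ⟨hf1, hf2⟩
          refine ⟨(homogeneousSubmodule _ k (d+1+1)).smul_mem c hf1, ?_⟩
          rw [hsmul c f hf1, hf2, smul_smul, smul_smul, mul_comm] } with hZdef
    have hZmem : ∀ g : MvPolynomial (Fin (r+1)) k,
        g ∈ Z ↔ (g.IsHomogeneous (d+1+1) ∧ φ g = α • g) := fun g => Iff.rfl
    have hspan := span_lemma hr B (d+1) Z ?_
    · exact ⟨α, fun f hf => ((hZmem f).1 (hspan f hf)).2⟩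
    · intro ℓ q hgood hq
      refine (hZmem _).2 ⟨hmul ℓ hgood q hq, ?_⟩
      rw [hA ℓ hgood q hq, hsame ℓ hgood]

end Stmt0Aux
open Stmt0Aux in
/-- If `ψ` is a `k`-linear endomorphism of the space `S_d` of degree-`d`
forms of `S = k[X_0, …, X_r]` (with `char k = 0`, `r ≥ 1`, `d ≥ 1`) mapping `ℓ·S_{d-1}`
into itself for every linear form `ℓ ∈ S_1`, then `ψ` is multiplication by a single scalar
`α ∈ k`, and `ψ = 0` iff `α = 0`. -/
theorem stmt_0 {k : Type*} [Field k] [CharZero k] (r : ℕ) (hr : 1 ≤ r) (d : ℕ) (hd : 1 ≤ d)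
    (ψ : homogeneousSubmodule (Fin (r + 1)) k d →ₗ[k] homogeneousSubmodule (Fin (r + 1)) k d)
    (hψ : ∀ ℓ ∈ homogeneousSubmodule (Fin (r + 1)) k 1,
      ∀ f : homogeneousSubmodule (Fin (r + 1)) k d,
        (f : MvPolynomial (Fin (r + 1)) k) ∈
            Submodule.map (LinearMap.mulLeft k ℓ)
              (homogeneousSubmodule (Fin (r + 1)) k (d - 1)) →
          (ψ f : MvPolynomial (Fin (r + 1)) k) ∈
            Submodule.map (LinearMap.mulLeft k ℓ)
              (homogeneousSubmodule (Fin (r + 1)) k (d - 1))) :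
    ∃ α : k, (∀ f, ψ f = α • f) ∧ (ψ = 0 ↔ α = 0) := by
  classical
  obtain ⟨d', rfl⟩ : ∃ d', d = d' + 1 := ⟨d - 1, by omega⟩
  set φ : MvPolynomial (Fin (r+1)) k → MvPolynomial (Fin (r+1)) k :=
    fun f => if h : f.IsHomogeneous (d'+1) then (ψ ⟨f, h⟩ : MvPolynomial (Fin (r+1)) k) else 0
    with hφdef
  have hφeq : ∀ (f : MvPolynomial (Fin (r+1)) k) (h : f.IsHomogeneous (d'+1)),
      φ f = (ψ ⟨f, h⟩ : MvPolynomial (Fin (r+1)) k) := by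
    intro f h
    simp only [hφdef]
    rw [dif_pos h]
  have hadd : ∀ f g : MvPolynomial (Fin (r+1)) k, f.IsHomogeneous (d'+1) →
      g.IsHomogeneous (d'+1) → φ (f + g) = φ f + φ g := by
    intro f g hf hg
    rw [hφeq f hf, hφeq g hg, hφeq (f+g) (hf.add hg)]
    have h1 : (⟨f + g, hf.add hg⟩ : homogeneousSubmodule (Fin (r+1)) k (d'+1))
        = ⟨f, hf⟩ + ⟨g, hg⟩ := rfl
    rw [h1, map_add]
    rfl
  have hsmul : ∀ (c : k) (f : MvPolynomial (Fin (r+1)) k), f.IsHomogeneous (d'+1) →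
      φ (c • f) = c • φ f := by
    intro c f hf
    have hcf : ((c • f : MvPolynomial (Fin (r+1)) k)).IsHomogeneous (d'+1) :=
      (homogeneousSubmodule _ k (d'+1)).smul_mem c hf
    rw [hφeq f hf, hφeq (c • f) hcf]
    have h1 : (⟨c • f, hcf⟩ : homogeneousSubmodule (Fin (r+1)) k (d'+1)) = c • ⟨f, hf⟩ := rfl
    rw [h1, map_smul]
    rfl
  have hmem : ∀ f : MvPolynomial (Fin (r+1)) k, f.IsHomogeneous (d'+1) →
      (φ f).IsHomogeneous (d'+1) := by
    intro f hf
    rw [hφeq f hf]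
    exact (ψ ⟨f, hf⟩).2
  have hdvd : ∀ m, Good (∅ : Finset (MvPolynomial (Fin (r+1)) k)) m →
      ∀ f : MvPolynomial (Fin (r+1)) k, f.IsHomogeneous (d'+1) → m ∣ f → m ∣ φ f := by
    intro m hm f hf hdf
    have hfmem : f ∈ Submodule.map (LinearMap.mulLeft k m)
        (homogeneousSubmodule (Fin (r+1)) k (d'+1-1)) := by
      obtain ⟨q, hq⟩ := hdf
      have h2 := hom_factor hm.1 hm.2.1 hf hq
      exact ⟨homogeneousComponent (d'+1-1) q,
        homogeneousComponent_isHomogeneous (d'+1-1) q, h2.symm⟩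
    have h3 := hψ m hm.1 ⟨f, hf⟩ hfmem
    obtain ⟨q', -, hq'⟩ := h3
    rw [hφeq f hf]
    exact ⟨q', hq'.symm⟩
  obtain ⟨α, hα⟩ := key hr d' ∅ φ hadd hsmul hmem hdvd
  have hψall : ∀ f, ψ f = α • f := by
    intro f
    have hf : (f : MvPolynomial (Fin (r+1)) k).IsHomogeneous (d'+1) := f.2
    apply Subtype.ext
    have h1 : φ (f : MvPolynomial (Fin (r+1)) k)
        = (ψ f : MvPolynomial (Fin (r+1)) k) := by
      rw [hφeq _ hf]
    rw [← h1, hα _ hf]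
    rfl
  refine ⟨α, hψall, ?_, ?_⟩
  · intro h0
    have hf0 : ((X (0:Fin (r+1)) : MvPolynomial (Fin (r+1)) k) ^ (d'+1)).IsHomogeneous (d'+1) := by
      simpa using (isHomogeneous_X k (0:Fin (r+1))).pow (d'+1)
    have h1 := hα _ hf0
    rw [hφeq _ hf0, h0] at h1
    simp only [LinearMap.zero_apply, ZeroMemClass.coe_zero] at h1
    rcases smul_eq_zero.1 h1.symm with h | h
    · exact h
    · exact absurd h (pow_ne_zero _ (X_ne_zero _))
  · intro h0
    apply LinearMap.ext
    intro f
    rw [hψall f, h0, zero_smul, LinearMap.zero_apply]
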